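/- Let S be a real symmetric N×N matrix admitting an orthonormal eigenbasis ψ₁,…,ψ_N with eigenvalues 1 = λ₁ > λ₂ ≥ ⋯ ≥ λ_N > −1, and let λ = max(|λ₂|, |λ_N|) < 1. Then every diagonal entry of the Moore–Penrose pseudoinverse of I − S² satisfies 0 ≤ ((I − S²)†)_{ii} ≤ 1/(1 − λ²) for all i ∈ {1,…,N}. -/

import Mathlib

open Matrix

/-- `P` is the Moore–Penrose pseudoinverse of `M`. -/
def IsMoorePenrose {n : Type*} [Fintype n] [DecidableEq n]
    (M P : Matrix n n ℝ) : Prop :=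
  M * P * M = M ∧ P * M * P = P ∧ (M * P)ᵀ = M * P ∧ (P * M)ᵀ = P * M

lemma mp_unique {n : Type*} [Fintype n] [DecidableEq n] {M P1 P2 : Matrix n n ℝ}
    (h1 : IsMoorePenrose M P1) (h2 : IsMoorePenrose M P2) : P1 = P2 := by
  obtain ⟨a1, b1, c1, d1⟩ := h1
  obtain ⟨a2, b2, c2, d2⟩ := h2
  have hMP : M * P1 = M * P2 := by
    calc M * P1 = M * P2 * M * P1 := by rw [a2]
      _ = (M * P2) * (M * P1) := by simp only [Matrix.mul_assoc]
      _ = (M * P2)ᵀ * (M * P1)ᵀ := by rw [c1, c2]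
      _ = ((M * P1) * (M * P2))ᵀ := by rw [← Matrix.transpose_mul]
      _ = ((M * P1 * M) * P2)ᵀ := by simp only [Matrix.mul_assoc]
      _ = (M * P2)ᵀ := by rw [a1]
      _ = M * P2 := c2
  have hPM : P1 * M = P2 * M := by
    calc P1 * M = P1 * (M * P2 * M) := by rw [a2]
      _ = (P1 * M) * (P2 * M) := by simp only [Matrix.mul_assoc]
      _ = (P1 * M)ᵀ * (P2 * M)ᵀ := by rw [d1, d2]
      _ = ((P2 * M) * (P1 * M))ᵀ := by rw [← Matrix.transpose_mul]
      _ = (P2 * (M * P1 * M))ᵀ := by simp only [Matrix.mul_assoc]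
      _ = (P2 * M)ᵀ := by rw [a1]
      _ = P2 * M := d2
  calc P1 = P1 * M * P1 := b1.symm
    _ = P1 * (M * P2) := by rw [Matrix.mul_assoc, hMP]
    _ = (P1 * M) * P2 := by rw [Matrix.mul_assoc]
    _ = P2 * M * P2 := by rw [hPM]
    _ = P2 := b2

/-- for a real symmetric matrix `S` with orthonormal eigenbasis
and eigenvalues `1 = λ₁ > λ₂ ≥ ⋯ ≥ λ_N > −1` and `λ = max(|λ₂|,|λ_N|) < 1`,
every diagonal entry of `(I − S²)†` lies in `[0, 1/(1−λ²)]`. -/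
theorem stmt11 (N : ℕ) (hN : 2 ≤ N) (S : Matrix (Fin N) (Fin N) ℝ)
    (hS : Sᵀ = S)
    (ψ : Fin N → (Fin N → ℝ)) (lam : Fin N → ℝ)
    (heig : ∀ k, S.mulVec (ψ k) = lam k • ψ k)
    (horth : ∀ k l, ψ k ⬝ᵥ ψ l = if k = l then 1 else 0)
    (hlam0 : lam ⟨0, by omega⟩ = 1)
    (hanti : ∀ k l : Fin N, k ≤ l → lam l ≤ lam k)
    (hgap : ∀ k : Fin N, k ≠ ⟨0, by omega⟩ → lam k < 1)
    (hlow : ∀ k : Fin N, -1 < lam k)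
    (lamStar : ℝ)
    (hlamStar : lamStar = max |lam ⟨1, by omega⟩| |lam ⟨N - 1, by omega⟩|)
    (hlamStar1 : lamStar < 1)
    (Q : Matrix (Fin N) (Fin N) ℝ)
    (hQ : IsMoorePenrose (1 - S ^ 2) Q)
    (i : Fin N) :
    0 ≤ Q i i ∧ Q i i ≤ 1 / (1 - lamStar ^ 2) := by
  set z : Fin N := ⟨0, by omega⟩ with hz
  set U : Matrix (Fin N) (Fin N) ℝ := Matrix.of ψ with hU
  have hUUT : U * Uᵀ = 1 := by
    ext k l
    simpa [Matrix.mul_apply, Matrix.one_apply, hU, dotProduct] using horth k l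
  have hUTU : Uᵀ * U = 1 := mul_eq_one_comm.mp hUUT
  set D : Matrix (Fin N) (Fin N) ℝ := Matrix.diagonal lam with hD
  have hSU : S * Uᵀ = Uᵀ * D := by
    ext a k
    have h := congrFun (heig k) a
    simp only [Matrix.mulVec, dotProduct, Pi.smul_apply, smul_eq_mul] at h
    simp only [Matrix.mul_apply, Matrix.transpose_apply, hU, hD, Matrix.of_apply,
      Matrix.diagonal_apply, mul_ite, mul_zero, Finset.sum_ite_eq', Finset.mem_univ,
      if_true]
    rw [h]; ring
  have hS_eq : S = Uᵀ * D * U := by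
    calc S = S * (Uᵀ * U) := by rw [hUTU, Matrix.mul_one]
      _ = (S * Uᵀ) * U := by rw [Matrix.mul_assoc]
      _ = Uᵀ * D * U := by rw [hSU]
  set conj : (Fin N → ℝ) → Matrix (Fin N) (Fin N) ℝ :=
    fun d => Uᵀ * Matrix.diagonal d * U with hconj
  have hconj_mul : ∀ d d' : Fin N → ℝ, conj d * conj d' = conj (d * d') := by
    intro d d'
    simp only [hconj]
    calc (Uᵀ * Matrix.diagonal d * U) * (Uᵀ * Matrix.diagonal d' * U)
        = Uᵀ * Matrix.diagonal d * (U * Uᵀ) * (Matrix.diagonal d' * U) := by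
          simp only [Matrix.mul_assoc]
      _ = Uᵀ * (Matrix.diagonal d * Matrix.diagonal d') * U := by
          rw [hUUT, Matrix.mul_one]; simp only [Matrix.mul_assoc]
      _ = Uᵀ * Matrix.diagonal (d * d') * U := by rw [Matrix.diagonal_mul_diagonal]; rfl
  have hconj_T : ∀ d : Fin N → ℝ, (conj d)ᵀ = conj d := by
    intro d
    simp [hconj, Matrix.transpose_mul, Matrix.diagonal_transpose, Matrix.mul_assoc]
  set f : Fin N → ℝ := fun k => 1 - lam k ^ 2 with hf
  set g : Fin N → ℝ := fun k => if k = z then 0 else (1 - lam k ^ 2)⁻¹ with hg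
  have hfk_pos : ∀ k : Fin N, k ≠ z → 0 < 1 - lam k ^ 2 := by
    intro k hk
    have h1 := hgap k hk
    have h2 := hlow k
    nlinarith
  have hM : 1 - S ^ 2 = conj f := by
    have h1 : (1 : Matrix (Fin N) (Fin N) ℝ) = conj 1 := by
      have hd1 : Matrix.diagonal (1 : Fin N → ℝ) = 1 := Matrix.diagonal_one
      simp only [hconj, hd1, Matrix.mul_one, hUTU]
    have h2 : S ^ 2 = conj (fun k => lam k ^ 2) := by
      have hll : (fun k => lam k ^ 2) = lam * lam := by
        funext k; simp [pow_two]
      rw [hll, pow_two, hS_eq, ← hconj_mul lam lam, hD]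
    rw [h1, h2]
    simp only [hconj]
    rw [← Matrix.sub_mul, ← Matrix.mul_sub, ← Matrix.diagonal_sub]
    congr 2
  have hMP_P : IsMoorePenrose (1 - S ^ 2) (conj g) := by
    have hfgf : f * g * f = f := by
      funext k
      by_cases hk : k = z
      · simp [hf, hg, hk, hlam0]
      · have hne : (1 - lam k ^ 2) ≠ 0 := ne_of_gt (hfk_pos k hk)
        simp only [Pi.mul_apply, hf, hg, if_neg hk]
        field_simp
    have hgfg : g * f * g = g := by
      funext k
      by_cases hk : k = z
      · simp [hg, hk]
      · have hne : (1 - lam k ^ 2) ≠ 0 := ne_of_gt (hfk_pos k hk)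
        simp only [Pi.mul_apply, hf, hg, if_neg hk]
        field_simp
    refine ⟨?_, ?_, ?_, ?_⟩
    · rw [hM, hconj_mul, hconj_mul, hfgf]
    · rw [hM, hconj_mul, hconj_mul, hgfg]
    · rw [hM, hconj_mul, hconj_T]
    · rw [hM, hconj_mul, hconj_T]
  have hQP : Q = conj g := mp_unique hQ hMP_P
  have hdiag : (conj g) i i = ∑ k, g k * ψ k i ^ 2 := by
    simp only [hconj]
    rw [Matrix.mul_apply]
    refine Finset.sum_congr rfl fun k _ => ?_
    rw [Matrix.mul_diagonal]
    simp only [Matrix.transpose_apply, hU, Matrix.of_apply]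
    ring
  have hsum1 : ∑ k, ψ k i ^ 2 = 1 := by
    have h := congrFun (congrFun hUTU i) i
    simp only [Matrix.mul_apply, Matrix.transpose_apply, hU, Matrix.of_apply,
      Matrix.one_apply_eq] at h
    rw [← h]
    refine Finset.sum_congr rfl fun k _ => ?_
    ring
  have hlamStar0 : 0 ≤ lamStar := by
    rw [hlamStar]
    exact le_trans (abs_nonneg _) (le_max_left _ _)
  have hc_pos : 0 < 1 - lamStar ^ 2 := by nlinarith
  have habs : ∀ k : Fin N, k ≠ z → |lam k| ≤ lamStar := by
    intro k hk
    have hk1 : (1 : ℕ) ≤ k.val := by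
      rcases Nat.eq_zero_or_pos k.val with h0 | h0
      · exact absurd (Fin.ext h0) hk
      · omega
    have h1 : lam k ≤ lam ⟨1, by omega⟩ := by
      refine hanti ⟨1, by omega⟩ k ?_
      rw [Fin.le_def]; simpa using hk1
    have h2 : lam ⟨N - 1, by omega⟩ ≤ lam k := by
      refine hanti k ⟨N - 1, by omega⟩ ?_
      rw [Fin.le_def]
      have := k.isLt
      simp; omega
    rw [hlamStar]
    rcases abs_cases (lam k) with ⟨he, h0⟩ | ⟨he, h0⟩
    · rw [he]
      exact le_trans h1 (le_trans (le_abs_self _) (le_max_left _ _))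
    · rw [he]
      have h3 := neg_le_abs (lam ⟨N - 1, by omega⟩)
      have h4 := le_max_right |lam ⟨1, by omega⟩| |lam ⟨N - 1, by omega⟩|
      linarith
  have hg_nonneg : ∀ k : Fin N, 0 ≤ g k := by
    intro k
    by_cases hk : k = z
    · simp [hg, hk]
    · simp only [hg, if_neg hk]
      exact le_of_lt (inv_pos.mpr (hfk_pos k hk))
  have hgle : ∀ k : Fin N, g k ≤ (1 - lamStar ^ 2)⁻¹ := by
    intro k
    by_cases hk : k = z
    · simp only [hg, if_pos hk]
      exact le_of_lt (inv_pos.mpr hc_pos)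
    · simp only [hg, if_neg hk]
      have h1 := habs k hk
      have h2 := le_abs_self (lam k)
      have h3 := neg_le_abs (lam k)
      refine inv_anti₀ hc_pos ?_
      nlinarith
  rw [hQP, hdiag]
  constructor
  · exact Finset.sum_nonneg fun k _ => mul_nonneg (hg_nonneg k) (sq_nonneg _)
  · rw [one_div]
    calc ∑ k, g k * ψ k i ^ 2 ≤ ∑ k, (1 - lamStar ^ 2)⁻¹ * ψ k i ^ 2 :=
          Finset.sum_le_sum fun k _ => mul_le_mul_of_nonneg_right (hgle k) (sq_nonneg _)
      _ = (1 - lamStar ^ 2)⁻¹ := by rw [← Finset.mul_sum, hsum1, mul_one]
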